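/- If A is a spatial hybrid motion and H₁, H₂ are spatial hybrid numbers with g(H₁, H₂) = 0, then (AH₁)(AH₂) = A(H₁H₂), i.e., A commutes with the hybridian product of g-orthogonal spatial hybrid numbers. -/
import Mathlib

open Real Matrix

noncomputable section

/-- Scalar product on the spatial hybrid number space, coordinates (b,c,d). -/
def g (x y : Fin 3 → ℝ) : ℝ := x 0 * y 0 - x 0 * y 1 - y 0 * x 1 - x 2 * y 2

/-- Hybridian product of g-orthogonal spatial hybrid numbers. -/
def hprod (x y : Fin 3 → ℝ) : Fin 3 → ℝ :=
  ![x 0 * y 2 - y 0 * x 2, x 0 * y 2 - y 0 * x 2 - x 1 * y 2 + y 1 * x 2,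
    y 0 * x 1 - x 0 * y 1]

/-- Gram matrix of g. -/
def Gmat : Matrix (Fin 3) (Fin 3) ℝ := !![1, -1, 0; -1, 0, 0; 0, 0, -1]

/-- The "triple product" for g. -/
def D (x y z : Fin 3 → ℝ) : ℝ :=
  z 0 * (x 1 * y 2 - x 2 * y 1) + z 1 * (x 2 * y 0 - x 0 * y 2)
    + z 2 * (x 0 * y 1 - x 1 * y 0)

lemma g_hprod (x y z : Fin 3 → ℝ) : g (hprod x y) z = D x y z := by
  simp [g, hprod, D]; ring

lemma D_mulVec (A : Matrix (Fin 3) (Fin 3) ℝ) (x y z : Fin 3 → ℝ) :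
    D (A.mulVec x) (A.mulVec y) (A.mulVec z) = A.det * D x y z := by
  simp [D, Matrix.mulVec, dotProduct, Fin.sum_univ_three, Matrix.det_fin_three]
  ring

lemma g_inv (A : Matrix (Fin 3) (Fin 3) ℝ) (hA : Aᵀ * Gmat * A = Gmat)
    (u z : Fin 3 → ℝ) : g (A.mulVec u) (A.mulVec z) = g u z := by
  have e : ∀ i j, (Aᵀ * Gmat * A) i j = Gmat i j := fun i j => by rw [hA]
  have h00 := e 0 0; have h01 := e 0 1; have h02 := e 0 2
  have h10 := e 1 0; have h11 := e 1 1; have h12 := e 1 2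
  have h20 := e 2 0; have h21 := e 2 1; have h22 := e 2 2
  simp [Matrix.mul_apply, Matrix.transpose_apply, Gmat, Matrix.vecHead, Matrix.vecTail, Fin.sum_univ_three] at h00 h01 h02 h10 h11 h12 h20 h21 h22
  simp [g, Matrix.mulVec, dotProduct, Fin.sum_univ_three]
  linear_combination (u 0 * z 0 * h00 + u 0 * z 1 * h01 + u 0 * z 2 * h02 +
    u 1 * z 0 * h10 + u 1 * z 1 * h11 + u 1 * z 2 * h12 +
    u 2 * z 0 * h20 + u 2 * z 1 * h21 + u 2 * z 2 * h22)

/-- Spatial hybrid motions commute with the hybridian product of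
g-orthogonal spatial hybrid numbers. -/
theorem stmt4 (A : Matrix (Fin 3) (Fin 3) ℝ) (hA : Aᵀ * Gmat * A = Gmat)
    (hdet : A.det = 1) (H₁ H₂ : Fin 3 → ℝ) (h : g H₁ H₂ = 0) :
    hprod (A.mulVec H₁) (A.mulVec H₂) = A.mulVec (hprod H₁ H₂) := by
  have hunit : IsUnit A.det := by rw [hdet]; exact isUnit_one
  have key : ∀ z : Fin 3 → ℝ,
      g (hprod (A.mulVec H₁) (A.mulVec H₂)) z = g (A.mulVec (hprod H₁ H₂)) z := by
    intro z
    have hz : z = A.mulVec (A⁻¹.mulVec z) := by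
      rw [Matrix.mulVec_mulVec, Matrix.mul_nonsing_inv A hunit, Matrix.one_mulVec]
    rw [hz, g_hprod, D_mulVec, hdet, one_mul, g_inv A hA, g_hprod]
  have k0 := key ![1,0,0]; have k1 := key ![0,1,0]; have k2 := key ![0,0,1]
  simp [g] at k0 k1 k2
  funext i
  fin_cases i <;> simp_all <;> linarith
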